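/- For every 0 ≤ l ≤ r ≤ n, the function t ↦ R_{lr}(x_t) on {l,...,r} (the max-regret of the subpath [x_l, x_r] as assumed dominant part with sink x_t) is unimodal with a unique minimum value. -/

import Mathlib

/-- Maximum of `f` over a finite set of indices, with the empty maximum being `0`. -/
noncomputable def maxOver (S : Finset ℕ) (f : ℕ → ℝ) : ℝ := S.fold max 0 f

/-- Left evacuation time to sink `x t` of the subpath starting at `x l`, under weights `w`. -/
noncomputable def thetaL (x : ℕ → ℝ) (τ : ℝ) (w : ℕ → ℝ) (l t : ℕ) : ℝ :=
  maxOver (Finset.Ico l t) (fun i => (x t - x i) * τ + ∑ j ∈ Finset.Icc l i, w j)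

/-- Right evacuation time to sink `x t` of the subpath ending at `x r`, under weights `w`. -/
noncomputable def thetaR (x : ℕ → ℝ) (τ : ℝ) (w : ℕ → ℝ) (t r : ℕ) : ℝ :=
  maxOver (Finset.Ioc t r) (fun i => (x i - x t) * τ + ∑ j ∈ Finset.Icc i r, w j)

/-- 1-sink evacuation time `Θ¹([x_l,x_r], x_t, w)`. -/
noncomputable def theta1 (x : ℕ → ℝ) (τ : ℝ) (w : ℕ → ℝ) (l t r : ℕ) : ℝ :=
  max (thetaL x τ w l t) (thetaR x τ w t r)

/-- A scenario assigns each vertex a weight within its bounds. -/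
def IsScenario (n : ℕ) (wlo whi : ℕ → ℝ) (s : ℕ → ℝ) : Prop :=
  ∀ i, i ≤ n → wlo i ≤ s i ∧ s i ≤ whi i

/-- A `k`-partition-with-sinks of the vertex set `{0,…,n}` into `k` consecutive
nonempty blocks `{l p, …, r p}` (`p ∈ {1,…,k}`) with a sink `t p` in each block. -/
structure KPartSinks (n k : ℕ) where
  l : ℕ → ℕ
  r : ℕ → ℕ
  t : ℕ → ℕ
  first : l 1 = 0
  last : r k = n
  consec : ∀ p, 1 ≤ p → p < k → l (p + 1) = r p + 1
  block_nonempty : ∀ p, 1 ≤ p → p ≤ k → l p ≤ r p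
  sink_lb : ∀ p, 1 ≤ p → p ≤ k → l p ≤ t p
  sink_ub : ∀ p, 1 ≤ p → p ≤ k → t p ≤ r p

/-- `k`-sink evacuation time `Θᵏ(P, {P̂,Ŷ}, w)`. -/
noncomputable def thetaK {n k : ℕ} (x : ℕ → ℝ) (τ : ℝ) (PY : KPartSinks n k) (w : ℕ → ℝ) : ℝ :=
  maxOver (Finset.Icc 1 k) (fun p => theta1 x τ w (PY.l p) (PY.t p) (PY.r p))

/-- Optimal `k`-sink evacuation time `Θᵏ_opt(P, w)`. -/
noncomputable def thetaOpt (x : ℕ → ℝ) (τ : ℝ) (n k : ℕ) (w : ℕ → ℝ) : ℝ :=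
  sInf {v : ℝ | ∃ PY : KPartSinks n k, thetaK x τ PY w = v}

/-- Regret `R({P̂,Ŷ}, w)`. -/
noncomputable def regret {n k : ℕ} (x : ℕ → ℝ) (τ : ℝ) (PY : KPartSinks n k) (w : ℕ → ℝ) : ℝ :=
  thetaK x τ PY w - thetaOpt x τ n k w

/-- Max-regret `R_max({P̂,Ŷ})`. -/
noncomputable def maxRegret {n k : ℕ} (x : ℕ → ℝ) (τ : ℝ) (wlo whi : ℕ → ℝ)
    (PY : KPartSinks n k) : ℝ :=
  sSup {v : ℝ | ∃ s : ℕ → ℝ, IsScenario n wlo whi s ∧ regret x τ PY s = v}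

/-- A worst-case scenario: a scenario attaining the max-regret. -/
def IsWorstCase {n k : ℕ} (x : ℕ → ℝ) (τ : ℝ) (wlo whi : ℕ → ℝ) (PY : KPartSinks n k)
    (s : ℕ → ℝ) : Prop :=
  IsScenario n wlo whi s ∧ regret x τ PY s = maxRegret x τ wlo whi PY

/-- `d` is the index of the dominant part of `{P̂,Ŷ}` under weights `w`:
the smallest index attaining `max_p Θ¹(P_p, y_p, w)`. -/
def IsDominant {n k : ℕ} (x : ℕ → ℝ) (τ : ℝ) (PY : KPartSinks n k) (w : ℕ → ℝ) (d : ℕ) : Prop :=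
  1 ≤ d ∧ d ≤ k ∧
  (∀ p, 1 ≤ p → p ≤ k →
    theta1 x τ w (PY.l p) (PY.t p) (PY.r p) ≤ theta1 x τ w (PY.l d) (PY.t d) (PY.r d)) ∧
  (∀ p, 1 ≤ p → p < d →
    theta1 x τ w (PY.l p) (PY.t p) (PY.r p) < theta1 x τ w (PY.l d) (PY.t d) (PY.r d))

/-- `R_{lr}(x_t)`: the max-regret of the subpath `[x_l,x_r]` as assumed dominant
part with sink `x_t`. -/
noncomputable def Rsink (x : ℕ → ℝ) (τ : ℝ) (wlo whi : ℕ → ℝ) (n k : ℕ) (l r t : ℕ) : ℝ :=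
  sSup {v : ℝ | ∃ s : ℕ → ℝ, IsScenario n wlo whi s ∧
    theta1 x τ s l t r - thetaOpt x τ n k s = v}

/-- `R_{lr}`: the minimax regret of the subpath `[x_l,x_r]` as assumed dominant part. -/
noncomputable def Rlr (x : ℕ → ℝ) (τ : ℝ) (wlo whi : ℕ → ℝ) (n k : ℕ) (l r : ℕ) : ℝ :=
  sInf {v : ℝ | ∃ t, l ≤ t ∧ t ≤ r ∧ Rsink x τ wlo whi n k l r t = v}

/-- A partition of `{0,…,i}` into `q` consecutive nonempty blocks `{l p, …, r p}`. -/
def IsQPartition (q i : ℕ) (l r : ℕ → ℕ) : Prop :=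
  l 1 = 0 ∧ r q = i ∧ (∀ p, 1 ≤ p → p < q → l (p + 1) = r p + 1) ∧
  (∀ p, 1 ≤ p → p ≤ q → l p ≤ r p)

/-- `M(q, i)`: the minimum over partitions of `{0,…,i}` into `q` consecutive
nonempty blocks of `max_p R_{l_p r_p}`. -/
noncomputable def Mreg (x : ℕ → ℝ) (τ : ℝ) (wlo whi : ℕ → ℝ) (n k : ℕ) (q i : ℕ) : ℝ :=
  sInf {v : ℝ | ∃ lf rf : ℕ → ℕ, IsQPartition q i lf rf ∧
    maxOver (Finset.Icc 1 q) (fun p => Rlr x τ wlo whi n k (lf p) (rf p)) = v}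

/-- Left-dominant scenario on `{l,…,r}`. -/
def LeftDominant (wlo whi s : ℕ → ℝ) (l r : ℕ) : Prop :=
  ∃ i, l ≤ i ∧ i ≤ r + 1 ∧ (∀ j, l ≤ j → j < i → s j = whi j) ∧
    (∀ j, i ≤ j → j ≤ r → s j = wlo j)

/-- Right-dominant scenario on `{l,…,r}`. -/
def RightDominant (wlo whi s : ℕ → ℝ) (l r : ℕ) : Prop :=
  ∃ i, l ≤ i ∧ i ≤ r + 1 ∧ (∀ j, l ≤ j → j < i → s j = wlo j) ∧
    (∀ j, i ≤ j → j ≤ r → s j = whi j)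

/-! ### Auxiliary lemmas -/

lemma maxOver_nonneg (S : Finset ℕ) (f : ℕ → ℝ) : 0 ≤ maxOver S f := by
  unfold maxOver
  rw [Finset.le_fold_max]
  exact Or.inl le_rfl

lemma maxOver_le_maxOver {S T : Finset ℕ} {f g : ℕ → ℝ} (hST : S ⊆ T)
    (h : ∀ i ∈ S, f i ≤ g i) : maxOver S f ≤ maxOver T g := by
  unfold maxOver
  rw [Finset.fold_max_le]
  refine ⟨maxOver_nonneg T g, fun i hi => ?_⟩
  refine (h i hi).trans ?_
  rw [show T.fold max 0 g = maxOver T g from rfl, ← Finset.mem_coe] at *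
  have : (g i : ℝ) ≤ maxOver T g := by
    unfold maxOver; rw [Finset.le_fold_max]; exact Or.inr ⟨i, hST hi, le_rfl⟩
  exact this

lemma x_mono (n : ℕ) (x : ℕ → ℝ) (hx : ∀ i, i < n → x i < x (i + 1)) :
    ∀ {a b : ℕ}, a ≤ b → b ≤ n → x a ≤ x b := by
  intro a b
  induction b with
  | zero => intro hab _; simp [Nat.le_zero.mp hab]
  | succ b ih =>
    intro hab hbn
    rcases Nat.lt_or_ge a (b + 1) with h | h
    · exact (ih (Nat.lt_succ_iff.mp h) (by omega)).trans (le_of_lt (hx b (by omega)))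
    · have : a = b + 1 := le_antisymm hab h
      simp [this]

lemma thetaOpt_nonneg (x : ℕ → ℝ) (τ : ℝ) (n k : ℕ) (w : ℕ → ℝ) :
    0 ≤ thetaOpt x τ n k w := by
  apply Real.sInf_nonneg
  rintro v ⟨PY, rfl⟩
  exact maxOver_nonneg _ _

lemma theta1_le_theta1_whi (n : ℕ) (x : ℕ → ℝ) (τ : ℝ) (wlo whi s : ℕ → ℝ)
    (hs : IsScenario n wlo whi s) (l t r : ℕ) (htr : t ≤ r) (hrn : r ≤ n) :
    theta1 x τ s l t r ≤ theta1 x τ whi l t r := by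
  unfold theta1 thetaL thetaR
  apply max_le_max <;>
  · apply maxOver_le_maxOver (le_refl _)
    intro i hi
    simp only [Finset.mem_Ico, Finset.mem_Ioc] at hi
    refine add_le_add le_rfl ?_
    apply Finset.sum_le_sum
    intro j hj
    simp only [Finset.mem_Icc] at hj
    exact (hs j (by omega)).2

/-- `Rsink` set membership of the lower-bound scenario. -/
lemma Rsink_set_nonempty (x : ℕ → ℝ) (τ : ℝ) (wlo whi : ℕ → ℝ) (n k : ℕ)
    (hw : ∀ i, i ≤ n → 0 < wlo i ∧ wlo i ≤ whi i) (l r t : ℕ) :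
    {v : ℝ | ∃ s : ℕ → ℝ, IsScenario n wlo whi s ∧
      theta1 x τ s l t r - thetaOpt x τ n k s = v}.Nonempty := by
  exact ⟨_, wlo, fun i hi => ⟨le_rfl, (hw i hi).2⟩, rfl⟩

lemma Rsink_set_bddAbove (x : ℕ → ℝ) (τ : ℝ) (wlo whi : ℕ → ℝ) (n k : ℕ)
    (l r t : ℕ) (htr : t ≤ r) (hrn : r ≤ n) :
    BddAbove {v : ℝ | ∃ s : ℕ → ℝ, IsScenario n wlo whi s ∧
      theta1 x τ s l t r - thetaOpt x τ n k s = v} := by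
  refine ⟨theta1 x τ whi l t r, ?_⟩
  rintro v ⟨s, hs, rfl⟩
  have h1 := theta1_le_theta1_whi n x τ wlo whi s hs l t r htr hrn
  have h2 := thetaOpt_nonneg x τ n k s
  linarith

/-- Quasiconvexity of `t ↦ Rsink x τ wlo whi n k l r t`. -/
lemma Rsink_quasiconvex (n k : ℕ) (x : ℕ → ℝ) (τ : ℝ) (wlo whi : ℕ → ℝ)
    (hx : ∀ i, i < n → x i < x (i + 1)) (hτ : 0 < τ)
    (hw : ∀ i, i ≤ n → 0 < wlo i ∧ wlo i ≤ whi i)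
    (l r t1 t t2 : ℕ) (h1 : t1 ≤ t) (h2 : t ≤ t2) (ht2 : t2 ≤ r) (hrn : r ≤ n) :
    Rsink x τ wlo whi n k l r t ≤
      max (Rsink x τ wlo whi n k l r t1) (Rsink x τ wlo whi n k l r t2) := by
  unfold Rsink
  apply csSup_le (Rsink_set_nonempty x τ wlo whi n k hw l r t)
  rintro v ⟨s, hs, rfl⟩
  have hL : thetaL x τ s l t ≤ thetaL x τ s l t2 := by
    unfold thetaL
    apply maxOver_le_maxOver (Finset.Ico_subset_Ico le_rfl h2)
    intro i _
    have hxle : x t ≤ x t2 := x_mono n x hx h2 (by omega)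
    have : (x t - x i) * τ ≤ (x t2 - x i) * τ :=
      mul_le_mul_of_nonneg_right (by linarith) hτ.le
    linarith
  have hR : thetaR x τ s t r ≤ thetaR x τ s t1 r := by
    unfold thetaR
    apply maxOver_le_maxOver (Finset.Ioc_subset_Ioc h1 le_rfl)
    intro i _
    have hxle : x t1 ≤ x t := x_mono n x hx h1 (by omega)
    have : (x i - x t) * τ ≤ (x i - x t1) * τ :=
      mul_le_mul_of_nonneg_right (by linarith) hτ.le
    linarith
  have hmax : theta1 x τ s l t r ≤ max (theta1 x τ s l t1 r) (theta1 x τ s l t2 r) := by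
    unfold theta1
    apply max_le
    · exact hL.trans ((le_max_left _ _).trans (le_max_right _ _))
    · exact hR.trans ((le_max_right _ _).trans (le_max_left _ _))
  have e1 : theta1 x τ s l t1 r - thetaOpt x τ n k s ≤ Rsink x τ wlo whi n k l r t1 :=
    le_csSup (Rsink_set_bddAbove x τ wlo whi n k l r t1 (h1.trans (h2.trans ht2)) hrn)
      ⟨s, hs, rfl⟩
  have e2 : theta1 x τ s l t2 r - thetaOpt x τ n k s ≤ Rsink x τ wlo whi n k l r t2 :=
    le_csSup (Rsink_set_bddAbove x τ wlo whi n k l r t2 ht2 hrn) ⟨s, hs, rfl⟩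
  have : theta1 x τ s l t r - thetaOpt x τ n k s ≤
      max (theta1 x τ s l t1 r - thetaOpt x τ n k s)
          (theta1 x τ s l t2 r - thetaOpt x τ n k s) := by
    rcases le_total (theta1 x τ s l t1 r) (theta1 x τ s l t2 r) with h | h
    · rw [max_eq_right h] at hmax
      exact le_max_of_le_right (by linarith)
    · rw [max_eq_left h] at hmax
      exact le_max_of_le_left (by linarith)
  exact this.trans (max_le_max e1 e2)

/-- the max-regret `t ↦ R_{lr}(x_t)` of a subpath as assumed
dominant part is unimodal with a unique minimum value on `{l, …, r}`. -/
theorem stmt_17 (n k : ℕ) (x : ℕ → ℝ) (τ : ℝ) (wlo whi : ℕ → ℝ)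
    (hx : ∀ i, i < n → x i < x (i + 1)) (hτ : 0 < τ)
    (hw : ∀ i, i ≤ n → 0 < wlo i ∧ wlo i ≤ whi i) (hk : 1 ≤ k)
    (l r : ℕ) (hlr : l ≤ r) (hrn : r ≤ n) :
    ∃ m, l ≤ m ∧ m ≤ r ∧
      (∀ a a', l ≤ a → a ≤ a' → a' ≤ m →
        Rsink x τ wlo whi n k l r a' ≤ Rsink x τ wlo whi n k l r a) ∧
      (∀ a a', m ≤ a → a ≤ a' → a' ≤ r →
        Rsink x τ wlo whi n k l r a ≤ Rsink x τ wlo whi n k l r a') := by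
  obtain ⟨m, hm, hmin⟩ := Finset.exists_min_image (Finset.Icc l r)
    (fun t => Rsink x τ wlo whi n k l r t) ⟨l, Finset.mem_Icc.mpr ⟨le_rfl, hlr⟩⟩
  rw [Finset.mem_Icc] at hm
  refine ⟨m, hm.1, hm.2, ?_, ?_⟩
  · intro a a' ha haa' ham
    have hq := Rsink_quasiconvex n k x τ wlo whi hx hτ hw l r a a' m haa' ham hm.2 hrn
    have hmle : Rsink x τ wlo whi n k l r m ≤ Rsink x τ wlo whi n k l r a :=
      hmin a (Finset.mem_Icc.mpr ⟨ha, by omega⟩)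
    calc Rsink x τ wlo whi n k l r a' ≤ _ := hq
      _ ≤ Rsink x τ wlo whi n k l r a := max_le le_rfl hmle
  · intro a a' ham haa' har
    have hq := Rsink_quasiconvex n k x τ wlo whi hx hτ hw l r m a a' ham haa' har hrn
    have hmle : Rsink x τ wlo whi n k l r m ≤ Rsink x τ wlo whi n k l r a' :=
      hmin a' (Finset.mem_Icc.mpr ⟨by omega, har⟩)
    calc Rsink x τ wlo whi n k l r a ≤ _ := hq
      _ ≤ Rsink x τ wlo whi n k l r a' := max_le hmle le_rfl
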